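/- Let D_i(t) = 1/(1 + h_i t) for i = 1,...,n with pairwise distinct h_i > 0, and probabilities p_i > 0 with Σ p_i = 1. Define the certainty-equivalent hyperbolic rate h(t) = (1/D(t) - 1)/t for t > 0, where D = Σ p_i D_i. Then h(t) → H as t → ∞, where H = (Σ p_i / h_i)^{-1} is the probability-weighted harmonic mean of h₁,...,hₙ. -/

import Mathlib

open Real Filter

/-- The certainty-equivalent hyperbolic discount rate of a mixture of proportional
hyperbolic discount functions converges to the probability-weighted harmonic mean of
the individual hyperbolic rates. -/
theorem certainty_equivalent_rate_tendsto_harmonic_mean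
    (n : ℕ) (h p : Fin n → ℝ)
    (hh : ∀ i, 0 < h i) (hdist : Function.Injective h)
    (hp : ∀ i, 0 < p i) (hsum : ∑ i, p i = 1)
    (D : ℝ → ℝ) (hD : ∀ t, D t = ∑ i, p i / (1 + h i * t))
    (hrate : ℝ → ℝ) (hhrate : ∀ t, 0 < t → hrate t = (1 / D t - 1) / t) :
    Tendsto hrate atTop (nhds ((∑ i, p i / h i)⁻¹)) := by
  have hn : Nonempty (Fin n) := by
    by_contra hc
    simp [not_nonempty_iff.mp hc, Finset.univ_eq_empty] at hsum
  -- D t > 0 for t > 0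
  have hDpos : ∀ t : ℝ, 0 < t → 0 < D t := by
    intro t ht
    rw [hD]
    apply Finset.sum_pos
    · intro i _
      have hhi := hh i
      exact div_pos (hp i) (by positivity)
    · exact Finset.univ_nonempty
  -- D t → 0
  have hD0 : Tendsto D atTop (nhds 0) := by
    have : Tendsto (fun t => ∑ i, p i / (1 + h i * t)) atTop (nhds (∑ i : Fin n, (0:ℝ))) := by
      apply tendsto_finset_sum
      intro i _
      have : Tendsto (fun t : ℝ => 1 + h i * t) atTop atTop :=
        tendsto_atTop_add_const_left _ _ (tendsto_id.const_mul_atTop (hh i))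
      simpa [div_eq_mul_inv] using (this.inv_tendsto_atTop).const_mul (p i)
    simpa [funext hD] using this
  -- t * D t → ∑ p i / h i
  have hS : Tendsto (fun t => t * D t) atTop (nhds (∑ i, p i / h i)) := by
    have key : ∀ i : Fin n, Tendsto (fun t : ℝ => p i * (t / (1 + h i * t))) atTop
        (nhds (p i / h i)) := by
      intro i
      have h1 : Tendsto (fun t : ℝ => t⁻¹ + h i) atTop (nhds (0 + h i)) := by
        apply Tendsto.add _ tendsto_const_nhds
        exact tendsto_inv_atTop_zero
      rw [zero_add] at h1
      have h2 : Tendsto (fun t : ℝ => (t⁻¹ + h i)⁻¹) atTop (nhds (h i)⁻¹) :=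
        h1.inv₀ (hh i).ne'
      have heq : ∀ᶠ t : ℝ in atTop, (t⁻¹ + h i)⁻¹ = t / (1 + h i * t) := by
        filter_upwards [eventually_gt_atTop 0] with t ht
        have hhi := hh i
        rw [eq_div_iff (by positivity)]
        field_simp
      have := h2.congr' heq
      simpa [div_eq_mul_inv, mul_comm] using this.const_mul (p i)
    have := tendsto_finset_sum Finset.univ (fun i _ => key i)
    apply this.congr
    intro t
    rw [hD, Finset.mul_sum]
    congr 1; ext i; field_simp
  -- main
  have hSpos : 0 < ∑ i, p i / h i :=
    Finset.sum_pos (fun i _ => div_pos (hp i) (hh i)) Finset.univ_nonempty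
  have hmain : Tendsto (fun t => (1 - D t) / (t * D t)) atTop
      (nhds ((∑ i, p i / h i)⁻¹)) := by
    have := ((tendsto_const_nhds (x := (1:ℝ))).sub hD0).div hS hSpos.ne'
    rw [sub_zero, one_div] at this
    exact this
  apply hmain.congr'
  filter_upwards [eventually_gt_atTop 0] with t ht
  rw [hhrate t ht]
  have hDt := (hDpos t ht).ne'
  field_simp
  try ring
  try tauto
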